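/- (Error representation via the dual problem.) Let V be a real Hilbert space, let A : V → V and M : V → ℝ be continuously differentiable (of class C¹), let u, U ∈ V and set f = A(u) (so u solves A(u) = f) and define the residual R(U) = A(U) − f. Define the mean-value derivative Ā' = ∫₀¹ A'(s U + (1−s) u) ds as a Bochner integral in the space of continuous linear operators on V, let ψ ∈ V be the Riesz representer of the mean-value derivative of M, i.e. ⟨v, ψ⟩ = (∫₀¹ M'(s U + (1−s) u) ds)(v) for all v ∈ V, and suppose φ ∈ V solves the dual problem (Ā')* φ = ψ, where (Ā')* is the Hilbert-space adjoint of Ā'. Then M(U) − M(u) = ⟨R(U), φ⟩. -/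

import Mathlib

open RealInnerProductSpace

/-- Error representation via the dual problem: with `f = A(u)`, residual
`R(U) = A(U) − f`, mean-value derivative `Ā' = ∫₀¹ A'(sU + (1−s)u) ds`, Riesz
representer `ψ` of the mean-value derivative of `M`, and dual solution `φ` of
`(Ā')* φ = ψ`, one has `M(U) − M(u) = ⟨R(U), φ⟩`. -/
theorem stmt17 {V : Type*}
    [NormedAddCommGroup V] [InnerProductSpace ℝ V] [CompleteSpace V]
    (A : V → V) (M : V → ℝ) (hA : ContDiff ℝ 1 A) (hM : ContDiff ℝ 1 M)
    (u U : V) (f : V) (hf : f = A u)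
    (Abar : V →L[ℝ] V)
    (hAbar : Abar = ∫ s in (0:ℝ)..1, fderiv ℝ A (s • U + (1 - s) • u))
    (ψ : V)
    (hψ : ∀ v, ⟪v, ψ⟫ = (∫ s in (0:ℝ)..1, fderiv ℝ M (s • U + (1 - s) • u)) v)
    (φ : V) (hφ : ContinuousLinearMap.adjoint Abar φ = ψ) :
    M U - M u = ⟪A U - f, φ⟫ := by
  set w := U - u with hw
  set γ : ℝ → V := fun s => s • U + (1 - s) • u with hγ
  have hγ0 : γ 0 = u := by simp [hγ]
  have hγ1 : γ 1 = U := by simp [hγ]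
  have hγcont : Continuous γ := by fun_prop
  have hγderiv : ∀ s : ℝ, HasDerivAt γ w s := by
    intro s
    have h1 : HasDerivAt (fun s : ℝ => s • U + (1 - s) • u)
        ((1:ℝ) • U + ((0:ℝ)-1) • u) s := by
      exact ((hasDerivAt_id s).smul_const U).add
        (((hasDerivAt_const s (1:ℝ)).sub (hasDerivAt_id s)).smul_const u)
    simpa [hw, γ, sub_smul, smul_sub, sub_eq_add_neg] using h1
  -- FTC for A
  have hAdiff := hA.differentiable one_ne_zero
  have hMdiff := hM.differentiable one_ne_zero
  have hAderiv : ∀ s ∈ Set.uIcc (0:ℝ) 1,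
      HasDerivAt (fun s => A (γ s)) ((fderiv ℝ A (γ s)) w) s := fun s _ =>
    (hAdiff (γ s)).hasFDerivAt.comp_hasDerivAt s (hγderiv s)
  have hMderiv : ∀ s ∈ Set.uIcc (0:ℝ) 1,
      HasDerivAt (fun s => M (γ s)) ((fderiv ℝ M (γ s)) w) s := fun s _ =>
    (hMdiff (γ s)).hasFDerivAt.comp_hasDerivAt s (hγderiv s)
  have hcontA : Continuous fun s => fderiv ℝ A (γ s) :=
    (hA.continuous_fderiv one_ne_zero).comp hγcont
  have hcontM : Continuous fun s => fderiv ℝ M (γ s) :=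
    (hM.continuous_fderiv one_ne_zero).comp hγcont
  have hintA : IntervalIntegrable (fun s => fderiv ℝ A (γ s)) MeasureTheory.volume 0 1 :=
    hcontA.intervalIntegrable 0 1
  have hintM : IntervalIntegrable (fun s => fderiv ℝ M (γ s)) MeasureTheory.volume 0 1 :=
    hcontM.intervalIntegrable 0 1
  have hintAw : IntervalIntegrable (fun s => (fderiv ℝ A (γ s)) w) MeasureTheory.volume 0 1 := by
    exact (hcontA.clm_apply continuous_const).intervalIntegrable 0 1
  have hintMw : IntervalIntegrable (fun s => (fderiv ℝ M (γ s)) w) MeasureTheory.volume 0 1 := by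
    exact (hcontM.clm_apply continuous_const).intervalIntegrable 0 1
  have hAU : A U - A u = Abar w := by
    have := intervalIntegral.integral_eq_sub_of_hasDerivAt hAderiv hintAw
    rw [hγ0, hγ1] at this
    rw [← this, hAbar, ContinuousLinearMap.intervalIntegral_apply hintA]
  have hMU : M U - M u = ⟪w, ψ⟫ := by
    have := intervalIntegral.integral_eq_sub_of_hasDerivAt hMderiv hintMw
    rw [hγ0, hγ1] at this
    rw [← this, hψ w, ContinuousLinearMap.intervalIntegral_apply hintM]
  rw [hMU, ← hφ, ContinuousLinearMap.adjoint_inner_right, hf, hAU]
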